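/- Let G be an abelian group carrying a ℚ-vector space structure, let P ⊆ G satisfy P + P ⊆ P and P ∩ (−P) = {0}, and let u ∈ P be an order unit of (G, P). Let τ : G → ℝ be an additive group homomorphism with τ(u) = 1 such that for every a ∈ G, τ(a) > 0 implies a ∈ P and τ(a) < 0 implies −a ∈ P. Then τ is a state of (G, P, u), and it is the unique state: every state ρ of (G, P, u) equals τ. -/
import Mathlib


/-- if τ is an additive functional with τ(u) = 1 whose strict positivity
(resp. negativity) forces membership in P (resp. −P), then τ is the unique state of
(G, P, u). -/
theorem stmt_9 {G : Type*} [AddCommGroup G] [Module ℚ G]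
    (P : Set G)
    (hzero : (0 : G) ∈ P)
    (hadd : ∀ a ∈ P, ∀ b ∈ P, a + b ∈ P)
    (hpointed : ∀ a : G, a ∈ P → -a ∈ P → a = 0)
    (u : G) (hu : u ∈ P)
    (hunit : ∀ x : G, ∃ n : ℕ, n • u - x ∈ P)
    (τ : G →+ ℝ) (hτu : τ u = 1)
    (hτ₁ : ∀ a : G, 0 < τ a → a ∈ P)
    (hτ₂ : ∀ a : G, τ a < 0 → -a ∈ P) :
    (∀ a ∈ P, 0 ≤ τ a) ∧
    ∀ ρ : G →+ ℝ, ρ u = 1 → (∀ a ∈ P, 0 ≤ ρ a) → ρ = τ := by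
  constructor
  · intro a ha
    by_contra h
    push_neg at h
    have hna : -a ∈ P := hτ₂ a h
    have : a = 0 := hpointed a ha hna
    rw [this, map_zero] at h
    exact lt_irrefl 0 h
  · intro ρ hρu hρpos
    ext a
    -- key: for any rational q, τ a < q → ρ a ≤ q, and q < τ a → q ≤ ρ a
    have key₁ : ∀ q : ℚ, τ a < q → ρ a ≤ q := by
      intro q hq
      have h1 : 0 < τ ((q : ℚ) • u - a) := by
        rw [map_sub, map_rat_smul, hτu]
        simp only [Rat.smul_def, mul_one]
        linarith
      have h2 : (q : ℚ) • u - a ∈ P := hτ₁ _ h1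
      have h3 : 0 ≤ ρ ((q : ℚ) • u - a) := hρpos _ h2
      rw [map_sub, map_rat_smul, hρu] at h3
      simp only [Rat.smul_def, mul_one] at h3
      linarith
    have key₂ : ∀ q : ℚ, (q : ℝ) < τ a → (q : ℝ) ≤ ρ a := by
      intro q hq
      have h1 : 0 < τ (a - (q : ℚ) • u) := by
        rw [map_sub, map_rat_smul, hτu]
        simp only [Rat.smul_def, mul_one]
        linarith
      have h2 : a - (q : ℚ) • u ∈ P := hτ₁ _ h1
      have h3 : 0 ≤ ρ (a - (q : ℚ) • u) := hρpos _ h2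
      rw [map_sub, map_rat_smul, hρu] at h3
      simp only [Rat.smul_def, mul_one] at h3
      linarith
    apply le_antisymm
    · by_contra h
      push_neg at h
      obtain ⟨q, hq1, hq2⟩ := exists_rat_btwn h
      exact absurd (key₁ q hq1) (not_le.mpr hq2)
    · by_contra h
      push_neg at h
      obtain ⟨q, hq1, hq2⟩ := exists_rat_btwn h
      exact absurd (key₂ q hq2) (not_le.mpr hq1)
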